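/- arXiv:2111.11532 — 4 statements merged into one kernel-verified Lean document; each statement's English description precedes it below -/
import Mathlib

section
/- Let H and H' be hypergraphs. If H' dilutes to H (that is, H is a hypergraph dilution of H'), then the generalised hypertree width of H is at most the generalised hypertree width of H': ghw(H) ≤ ghw(H'). -/
namespace DilutionPaper

universe u v w

/-- A (finite) hypergraph: a finite vertex set together with a set of
hyperedges, each a subset of the vertex set. -/
structure Hypergraph (α : Type u) [DecidableEq α] where
  verts : Finset α
  edges : Finset (Finset α)
  valid : ∀ e ∈ edges, e ⊆ verts

variable {α : Type u} {β : Type v} {γ : Type w}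
variable [DecidableEq α] [DecidableEq β] [DecidableEq γ]

namespace Hypergraph

/-- The set `I_v` of edges incident to a vertex. -/
def incident (H : Hypergraph α) (vtx : α) : Finset (Finset α) :=
  H.edges.filter (fun e => vtx ∈ e)

/-- The degree of a hypergraph: the maximum degree of a vertex. -/
def degree (H : Hypergraph α) : ℕ :=
  H.verts.sup fun vtx => (H.incident vtx).card

/-- The rank: maximum cardinality of an edge. -/
def rank (H : Hypergraph α) : ℕ := H.edges.sup Finset.card

/-- Deletion of a vertex (from the vertex set and from all edges). -/
def deleteVertex (H : Hypergraph α) (vtx : α) : Hypergraph α where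
  verts := H.verts.erase vtx
  edges := H.edges.image fun e => e.erase vtx
  valid := by
    intro e he
    rcases Finset.mem_image.mp he with ⟨f, hf, rfl⟩
    intro x hx
    rcases Finset.mem_erase.mp hx with ⟨hx1, hx2⟩
    exact Finset.mem_erase.mpr ⟨hx1, H.valid f hf hx2⟩

/-- Deletion of an edge. -/
def deleteEdge (H : Hypergraph α) (f : Finset α) : Hypergraph α where
  verts := H.verts
  edges := H.edges.erase f
  valid := fun e he => H.valid e (Finset.mem_of_mem_erase he)

/-- The new edge `(⋃ I_v) \ {v}` created by merging on `v`. -/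
def mergedEdge (H : Hypergraph α) (vtx : α) : Finset α :=
  ((H.incident vtx).biUnion id).erase vtx

/-- Merging on a vertex `v`: replace all edges incident to `v` by the single
new edge `(⋃ I_v) \ {v}` (and remove `v` from the vertex set). -/
def merge (H : Hypergraph α) (vtx : α) : Hypergraph α where
  verts := H.verts.erase vtx
  edges := (H.edges \ H.incident vtx) ∪ {H.mergedEdge vtx}
  valid := by
    intro e he
    rcases Finset.mem_union.mp he with he | he
    · rcases Finset.mem_sdiff.mp he with ⟨heE, heI⟩
      intro x hx
      refine Finset.mem_erase.mpr ⟨?_, H.valid e heE hx⟩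
      rintro rfl
      exact heI (Finset.mem_filter.mpr ⟨heE, hx⟩)
    · rw [Finset.mem_singleton] at he
      subst he
      intro x hx
      rcases Finset.mem_erase.mp hx with ⟨hx1, hx2⟩
      rcases Finset.mem_biUnion.mp hx2 with ⟨f, hf, hxf⟩
      exact Finset.mem_erase.mpr ⟨hx1, H.valid f (Finset.mem_filter.mp hf).1 hxf⟩

/-- A single dilution operation. -/
inductive Step : Hypergraph α → Hypergraph α → Prop
  | deleteVertex (H : Hypergraph α) (vtx : α) (hv : vtx ∈ H.verts) :
      Step H (H.deleteVertex vtx)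
  | deleteSubedge (H : Hypergraph α) (f e : Finset α) (hf : f ∈ H.edges)
      (he : e ∈ H.edges) (hfe : f ⊂ e) : Step H (H.deleteEdge f)
  | merge (H : Hypergraph α) (vtx : α) (hv : vtx ∈ H.verts)
      (hne : (H.incident vtx).Nonempty) : Step H (H.merge vtx)

/-- Isomorphism of hypergraphs: a bijection on vertices inducing a bijection
on edges. -/
def Isomorphic (H : Hypergraph α) (G : Hypergraph β) : Prop :=
  ∃ φ : α → β, Set.BijOn φ ↑H.verts ↑G.verts ∧
    Set.BijOn (fun e : Finset α => e.image φ) ↑H.edges ↑G.edges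

/-- `H'.DilutesTo H`: `H` is a hypergraph dilution of `H'`, i.e. `H` is
isomorphic to a hypergraph reachable from `H'` by a finite sequence of
dilution operations. -/
def DilutesTo (H' : Hypergraph α) (H : Hypergraph β) : Prop :=
  ∃ K : Hypergraph α, Relation.ReflTransGen Step H' K ∧ K.Isomorphic H

/-- A tree decomposition of a hypergraph. -/
structure TreeDecomp (H : Hypergraph α) where
  ι : Type
  T : SimpleGraph ι
  isTree : T.IsTree
  bags : ι → Finset α
  bags_sub : ∀ u, bags u ⊆ H.verts
  cover : ∀ e ∈ H.edges, ∃ u, e ⊆ bags u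
  link : ∀ vtx : α, (T.induce {u | vtx ∈ bags u}).Preconnected

/-- The edge cover number `ρ(S)`: the least number of edges whose union
contains `S` (`⊤` if there is no such family). -/
noncomputable def edgeCoverNum (H : Hypergraph α) (S : Finset α) : ℕ∞ :=
  sInf {k : ℕ∞ | ∃ F : Finset (Finset α),
    F ⊆ H.edges ∧ (F.card : ℕ∞) = k ∧ S ⊆ F.biUnion id}

/-- The `ρ`-width of a tree decomposition. -/
noncomputable def TreeDecomp.ghwWidth {H : Hypergraph α} (td : TreeDecomp H) : ℕ∞ :=
  ⨆ u : td.ι, edgeCoverNum H (td.bags u)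

/-- Generalised hypertree width. -/
noncomputable def ghw (H : Hypergraph α) : ℕ∞ :=
  ⨅ td : TreeDecomp H, td.ghwWidth

/-- Treewidth. -/
noncomputable def tw (H : Hypergraph α) : ℕ∞ :=
  ⨅ td : TreeDecomp H, ⨆ u : td.ι, ((td.bags u).card : ℕ∞) - 1

/-- The dual hypergraph: vertices are the edges of `H`, edges are the
incidence sets `I_v`. -/
def dual (H : Hypergraph α) : Hypergraph (Finset α) where
  verts := H.edges
  edges := H.verts.image fun vtx => H.incident vtx
  valid := by
    intro e he
    rcases Finset.mem_image.mp he with ⟨vtx, -, rfl⟩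
    intro f hf
    exact (Finset.mem_filter.mp hf).1

/-- A reduced hypergraph: no degree-0 vertex, no empty edge, and no two
distinct vertices with the same incident edge set. -/
def IsReduced (H : Hypergraph α) : Prop :=
  (∀ vtx ∈ H.verts, (H.incident vtx).Nonempty) ∧
  (∅ ∉ H.edges) ∧
  ∀ vtx ∈ H.verts, ∀ w ∈ H.verts, H.incident vtx = H.incident w → vtx = w

/-- The hypergraph obtained from `H` by keeping only the vertices in `R`
(deleting all others from the vertex set and from all edges) and deleting
all (resulting) empty edges. -/
def reduceBy (H : Hypergraph α) (R : Finset α) : Hypergraph α where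
  verts := R
  edges := (H.edges.image fun e => e ∩ R).filter fun e => e ≠ ∅
  valid := by
    intro e he
    rcases Finset.mem_image.mp (Finset.mem_filter.mp he).1 with ⟨f, -, rfl⟩
    exact Finset.inter_subset_right

/-- `R` is a system of representatives witnessing that `H.reduceBy R` is the
reduced hypergraph of `H`: `R` consists of vertices of positive degree, one
for each class of vertices with identical incident edge sets. -/
def IsReductionRep (H : Hypergraph α) (R : Finset α) : Prop :=
  R ⊆ H.verts ∧
  (∀ vtx ∈ R, (H.incident vtx).Nonempty) ∧
  ∀ vtx ∈ H.verts, (H.incident vtx).Nonempty →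
    ∃! w, w ∈ R ∧ H.incident w = H.incident vtx

/-- Adjacency in (the primal graph of) a hypergraph. -/
def Adj (H : Hypergraph α) (x y : α) : Prop :=
  x ≠ y ∧ ∃ e ∈ H.edges, x ∈ e ∧ y ∈ e

/-- Connectedness of a hypergraph. -/
def Connected (H : Hypergraph α) : Prop :=
  H.verts.Nonempty ∧
  ∀ x ∈ H.verts, ∀ y ∈ H.verts, Relation.ReflTransGen H.Adj x y

/-- A graph, viewed as a 2-uniform hypergraph. -/
def IsGraph (H : Hypergraph α) : Prop := ∀ e ∈ H.edges, e.card = 2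

/-- A set of vertices is connected (in the primal graph), staying inside the set. -/
def ConnectedIn (F : Hypergraph β) (S : Finset β) : Prop :=
  ∀ x ∈ S, ∀ y ∈ S,
    Relation.ReflTransGen (fun a b => a ∈ S ∧ b ∈ S ∧ F.Adj a b) x y

/-- A minor map from the graph `G` into (the primal graph of) `F`. -/
def IsMinorMap (G : Hypergraph γ) (F : Hypergraph β) (μ : γ → Finset β) : Prop :=
  (∀ vtx ∈ G.verts, (μ vtx).Nonempty ∧ μ vtx ⊆ F.verts ∧ F.ConnectedIn (μ vtx)) ∧
  (∀ x ∈ G.verts, ∀ y ∈ G.verts, x ≠ y → μ x ∩ μ y = ∅) ∧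
  ∀ x y : γ, G.Adj x y → ∃ a ∈ μ x, ∃ b ∈ μ y, F.Adj a b

/-- `G` is a minor of (the primal graph of) `F`. -/
def IsMinor (G : Hypergraph γ) (F : Hypergraph β) : Prop :=
  ∃ μ : γ → Finset β, IsMinorMap G F μ

/-- The `n×m` grid graph (as a 2-uniform hypergraph on `[n]×[m]`,
zero-indexed): `(i,j)` and `(i',j')` are adjacent iff `|i−i'| + |j−j'| = 1`. -/
def gridGraph (n m : ℕ) : Hypergraph (ℕ × ℕ) where
  verts := Finset.range n ×ˢ Finset.range m
  edges :=
    (((Finset.range n ×ˢ Finset.range m) ×ˢ (Finset.range n ×ˢ Finset.range m)).filter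
        fun p => Nat.dist p.1.1 p.2.1 + Nat.dist p.1.2 p.2.2 = 1).image
      fun p => {p.1, p.2}
  valid := by
    intro e he
    rcases Finset.mem_image.mp he with ⟨p, hp, rfl⟩
    rcases Finset.mem_product.mp (Finset.mem_filter.mp hp).1 with ⟨h1, h2⟩
    intro x hx
    rcases Finset.mem_insert.mp hx with rfl | hx
    · exact h1
    · rw [Finset.mem_singleton] at hx; subst hx; exact h2

/-- The `n×m` jigsaw: the hypergraph dual of the `n×m` grid graph. -/
def jigsaw (n m : ℕ) : Hypergraph (Finset (ℕ × ℕ)) := (gridGraph n m).dual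

/-- A path in a hypergraph: an alternating sequence
`v 0, e 0, v 1, …, e (ℓ-1), v ℓ` of pairwise distinct vertices and pairwise
distinct edges with `{v i, v (i+1)} ⊆ e i`. -/
structure IsHPath (H : Hypergraph α) (ℓ : ℕ) (pv : ℕ → α) (pe : ℕ → Finset α) : Prop where
  vert_mem : ∀ i ≤ ℓ, pv i ∈ H.verts
  edge_mem : ∀ i < ℓ, pe i ∈ H.edges
  vert_inj : ∀ i ≤ ℓ, ∀ j ≤ ℓ, pv i = pv j → i = j
  edge_inj : ∀ i < ℓ, ∀ j < ℓ, pe i = pe j → i = j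
  incid : ∀ i < ℓ, pv i ∈ pe i ∧ pv (i + 1) ∈ pe i

/-- An expressive minor map from the graph `G` into the hypergraph `H`,
together with its edge witness `ρ`. -/
def IsExpressiveMinorMap (G : Hypergraph γ) (H : Hypergraph α)
    (μ : γ → Finset α) (ρ : Finset γ → Finset α) : Prop :=
  IsMinorMap G H μ ∧
  H.verts = G.verts.biUnion μ ∧
  Set.InjOn ρ ↑G.edges ∧
  (∀ e ∈ G.edges, ρ e ∈ H.edges) ∧
  (∀ x y : γ, ({x, y} : Finset γ) ∈ G.edges →
    (∃ a ∈ ρ {x, y}, a ∈ μ x) ∧ ∃ b ∈ ρ {x, y}, b ∈ μ y) ∧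
  ∀ e₁ ∈ G.edges, ∀ e₂ ∈ G.edges, e₁ ≠ e₂ → (e₁ ∩ e₂).Nonempty →
    ∃ (ℓ : ℕ) (pv : ℕ → α) (pe : ℕ → Finset α),
      IsHPath H ℓ pv pe ∧ pv 0 ∈ ρ e₁ ∧ pv ℓ ∈ ρ e₂ ∧
      ∀ i < ℓ, (∃ f ∈ G.edges, pe i = ρ f) →
        (i = 0 ∧ pe i = ρ e₁) ∨ (i = ℓ - 1 ∧ pe i = ρ e₂)

/-- `G` is an expressive minor of `H`. -/
def IsExpressiveMinor (G : Hypergraph γ) (H : Hypergraph α) : Prop :=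
  ∃ (μ : γ → Finset α) (ρ : Finset γ → Finset α), IsExpressiveMinorMap G H μ ρ

/-- A witness that `P` is an `n×m` pre-jigsaw: mappings `π` (here `vmap`) and
`o` (here `emap`) from the `n×m` jigsaw `J` into `P`, together with a fixed
family of connecting paths. -/
structure PreJigsawWitness (n m : ℕ) (P : Hypergraph α) where
  vmap : Finset (ℕ × ℕ) → α
  emap : Finset (Finset (ℕ × ℕ)) → Finset (Finset α)
  plen : Finset (ℕ × ℕ) → Finset (ℕ × ℕ) → Finset (Finset (ℕ × ℕ)) → ℕ
  ppv : Finset (ℕ × ℕ) → Finset (ℕ × ℕ) → Finset (Finset (ℕ × ℕ)) → ℕ → α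
  ppe : Finset (ℕ × ℕ) → Finset (ℕ × ℕ) → Finset (Finset (ℕ × ℕ)) → ℕ → Finset α
  vmap_mem : ∀ u ∈ (jigsaw n m).verts, vmap u ∈ P.verts
  emap_sub : ∀ e ∈ (jigsaw n m).edges, emap e ⊆ P.edges
  emap_disj : ∀ e ∈ (jigsaw n m).edges, ∀ f ∈ (jigsaw n m).edges, e ≠ f →
    emap e ∩ emap f = ∅
  emap_cover : ∀ g ∈ P.edges, ∃ e ∈ (jigsaw n m).edges, g ∈ emap e
  path_isPath : ∀ e ∈ (jigsaw n m).edges, ∀ u ∈ e, ∀ w ∈ e, u ≠ w →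
    IsHPath P (plen u w e) (ppv u w e) (ppe u w e)
  path_start : ∀ e ∈ (jigsaw n m).edges, ∀ u ∈ e, ∀ w ∈ e, u ≠ w →
    ppv u w e 0 = vmap u
  path_end : ∀ e ∈ (jigsaw n m).edges, ∀ u ∈ e, ∀ w ∈ e, u ≠ w →
    ppv u w e (plen u w e) = vmap w
  path_edges : ∀ e ∈ (jigsaw n m).edges, ∀ u ∈ e, ∀ w ∈ e, u ≠ w →
    ∀ i < plen u w e, ppe u w e i ∈ emap e
  path_avoid : ∀ e ∈ (jigsaw n m).edges, ∀ u ∈ e, ∀ w ∈ e, u ≠ w →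
    ∀ i ≤ plen u w e, ∀ z ∈ (jigsaw n m).verts, ppv u w e i = vmap z →
      ppv u w e i = vmap u ∨ ppv u w e i = vmap w
  vert_cover : ∀ x ∈ P.verts,
    (∃ u ∈ (jigsaw n m).verts, vmap u = x) ∨
    ∃ e ∈ (jigsaw n m).edges, ∃ u ∈ e, ∃ w ∈ e, u ≠ w ∧
      ∃ i ≤ plen u w e, ppv u w e i = x

/-- `P` is an `n×m` pre-jigsaw. -/
def IsPreJigsaw (n m : ℕ) (P : Hypergraph α) : Prop :=
  Nonempty (PreJigsawWitness n m P)



section Aux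

/-- Reachability in induced subgraphs is monotone in the set. -/
lemma reachable_induce_of_subset {ι : Type} (T : SimpleGraph ι) {A B : Set ι} (h : A ⊆ B)
    {a b : ι} (ha : a ∈ A) (hb : b ∈ A)
    (hr : (T.induce A).Reachable ⟨a, ha⟩ ⟨b, hb⟩) :
    (T.induce B).Reachable ⟨a, h ha⟩ ⟨b, h hb⟩ := by
  exact hr.map (⟨Set.inclusion h, fun {x y} hxy => hxy⟩ : T.induce A →g T.induce B)

lemma preconnected_union {ι : Type} (T : SimpleGraph ι) {A B : Set ι}
    (hA : (T.induce A).Preconnected) (hB : (T.induce B).Preconnected)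
    {x : ι} (hxA : x ∈ A) (hxB : x ∈ B) :
    (T.induce (A ∪ B)).Preconnected := by
  have key : ∀ a : ↑(A ∪ B), (T.induce (A ∪ B)).Reachable a ⟨x, Or.inl hxA⟩ := by
    rintro ⟨a, ha | ha⟩
    · exact reachable_induce_of_subset T Set.subset_union_left ha hxA (hA ⟨a, ha⟩ ⟨x, hxA⟩)
    · exact reachable_induce_of_subset T Set.subset_union_right ha hxB (hB ⟨a, ha⟩ ⟨x, hxB⟩)
  intro a b
  exact (key a).trans (key b).symm

lemma preconnected_of_empty {ι : Type} (T : SimpleGraph ι) {A : Set ι} (h : ∀ u, u ∉ A) :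
    (T.induce A).Preconnected := fun a => absurd a.2 (h a.1)

lemma edgeCoverNum_le' {H : Hypergraph α} {S : Finset α} {F : Finset (Finset α)}
    (hF : F ⊆ H.edges) (hcov : S ⊆ F.biUnion id) :
    edgeCoverNum H S ≤ (F.card : ℕ∞) := sInf_le ⟨F, hF, rfl, hcov⟩

lemma edgeCoverNum_mono_of {H₁ : Hypergraph α} {H₂ : Hypergraph β}
    {S₁ : Finset α} {S₂ : Finset β}
    (h : ∀ F, F ⊆ H₁.edges → S₁ ⊆ F.biUnion id →
      ∃ F', F' ⊆ H₂.edges ∧ F'.card ≤ F.card ∧ S₂ ⊆ F'.biUnion id) :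
    edgeCoverNum H₂ S₂ ≤ edgeCoverNum H₁ S₁ := by
  refine le_sInf ?_
  rintro k ⟨F, hF, rfl, hcov⟩
  obtain ⟨F', h1, h2, h3⟩ := h F hF hcov
  exact le_trans (edgeCoverNum_le' h1 h3) (Nat.cast_le.mpr h2)

end Aux

lemma ghw_deleteVertex_le (H : Hypergraph α) (v : α) : ghw (H.deleteVertex v) ≤ ghw H := by
  refine le_iInf fun td => iInf_le_of_le ⟨td.ι, td.T, td.isTree,
      fun u => (td.bags u).erase v, ?_, ?_, ?_⟩ ?_
  · intro u
    exact Finset.erase_subset_erase v (td.bags_sub u)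
  · intro e he
    rcases Finset.mem_image.mp he with ⟨f, hf, rfl⟩
    obtain ⟨u, hu⟩ := td.cover f hf
    exact ⟨u, Finset.erase_subset_erase v hu⟩
  · intro w
    by_cases hw : w = v
    · subst hw
      exact preconnected_of_empty _ (by simp)
    · have : {u | w ∈ (td.bags u).erase v} = {u | w ∈ td.bags u} := by
        ext u; simp [hw]
      rw [this]
      exact td.link w
  · refine iSup_mono fun u => edgeCoverNum_mono_of ?_
    intro F hF hcov
    refine ⟨F.image (fun e => e.erase v), ?_, Finset.card_image_le, ?_⟩
    · intro e he
      rcases Finset.mem_image.mp he with ⟨f, hf, rfl⟩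
      exact Finset.mem_image.mpr ⟨f, hF hf, rfl⟩
    · intro x hx
      rcases Finset.mem_erase.mp hx with ⟨hx1, hx2⟩
      rcases Finset.mem_biUnion.mp (hcov hx2) with ⟨f, hf, hxf⟩
      exact Finset.mem_biUnion.mpr ⟨f.erase v, Finset.mem_image.mpr ⟨f, hf, rfl⟩,
        Finset.mem_erase.mpr ⟨hx1, hxf⟩⟩


lemma ghw_deleteEdge_le (H : Hypergraph α) (f e : Finset α) (he : e ∈ H.edges) (hfe : f ⊂ e) :
    ghw (H.deleteEdge f) ≤ ghw H := by
  refine le_iInf fun td => iInf_le_of_le ⟨td.ι, td.T, td.isTree, td.bags, td.bags_sub,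
      fun g hg => td.cover g (Finset.mem_of_mem_erase hg), td.link⟩ ?_
  refine iSup_mono fun u => edgeCoverNum_mono_of ?_
  intro F hF hcov
  by_cases hfF : f ∈ F
  · refine ⟨insert e (F.erase f), ?_, ?_, ?_⟩
    · intro g hg
      rcases Finset.mem_insert.mp hg with rfl | hg
      · exact Finset.mem_erase.mpr ⟨(hfe.ne).symm, he⟩
      · exact Finset.erase_subset_erase f hF hg
    · calc (insert e (F.erase f)).card ≤ (F.erase f).card + 1 := Finset.card_insert_le _ _
        _ = F.card - 1 + 1 := by rw [Finset.card_erase_of_mem hfF]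
        _ = F.card := Nat.succ_pred_eq_of_pos (Finset.card_pos.mpr ⟨f, hfF⟩)
    · intro x hx
      rcases Finset.mem_biUnion.mp (hcov hx) with ⟨g, hg, hxg⟩
      by_cases hgf : g = f
      · subst hgf
        exact Finset.mem_biUnion.mpr ⟨e, Finset.mem_insert_self _ _, hfe.subset hxg⟩
      · exact Finset.mem_biUnion.mpr ⟨g, Finset.mem_insert_of_mem
          (Finset.mem_erase.mpr ⟨hgf, hg⟩), hxg⟩
  · exact ⟨F, fun g hg => Finset.mem_erase.mpr ⟨fun h => hfF (h ▸ hg), hF hg⟩,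
      le_refl _, hcov⟩

lemma ghw_merge_le (H : Hypergraph α) (v : α) (hne : (H.incident v).Nonempty) :
    ghw (H.merge v) ≤ ghw H := by
  classical
  -- a node whose bag contains v exists given any td and it covers mergedEdge? no:
  -- mergedEdge may split across bags; but bags' u for v ∈ bags u contains mergedEdge.
  refine le_iInf fun td => ?_
  set B : td.ι → Finset α :=
    fun u => if v ∈ td.bags u then (td.bags u).erase v ∪ H.mergedEdge v else td.bags u
    with hB
  have hmergedsub : H.mergedEdge v ⊆ H.verts.erase v := by
    intro x hx
    rcases Finset.mem_erase.mp hx with ⟨hx1, hx2⟩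
    rcases Finset.mem_biUnion.mp hx2 with ⟨g, hg, hxg⟩
    exact Finset.mem_erase.mpr ⟨hx1, H.valid g (Finset.mem_filter.mp hg).1 hxg⟩
  have hvnotB : ∀ u, v ∉ B u := by
    intro u
    rw [hB]
    dsimp only
    split_ifs with hv
    · rw [Finset.mem_union]
      rintro (h | h)
      · exact (Finset.mem_erase.mp h).1 rfl
      · exact (Finset.mem_erase.mp h).1 rfl
    · exact hv
  have hmem : ∀ u w, w ≠ v → (w ∈ B u ↔ (w ∈ td.bags u ∨ (v ∈ td.bags u ∧ w ∈ H.mergedEdge v))) := by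
    intro u w hw
    rw [hB]; dsimp only
    split_ifs with hv <;> simp [Finset.mem_union, Finset.mem_erase, hw, hv]
  refine iInf_le_of_le ⟨td.ι, td.T, td.isTree, B, ?_, ?_, ?_⟩ ?_
  · intro u
    rw [hB]; dsimp only
    split_ifs with hv
    · refine Finset.union_subset ?_ hmergedsub
      exact Finset.erase_subset_erase v (td.bags_sub u)
    · intro x hx
      exact Finset.mem_erase.mpr ⟨fun h => hv (h ▸ hx), td.bags_sub u hx⟩
  · intro e he
    rcases Finset.mem_union.mp he with he | he
    · rcases Finset.mem_sdiff.mp he with ⟨heE, heI⟩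
      obtain ⟨u, hu⟩ := td.cover e heE
      refine ⟨u, fun x hx => ?_⟩
      have hxv : x ≠ v := fun h => heI (Finset.mem_filter.mpr ⟨heE, h ▸ hx⟩)
      exact (hmem u x hxv).mpr (Or.inl (hu hx))
    · rw [Finset.mem_singleton] at he
      subst he
      obtain ⟨g, hg⟩ := hne
      rcases Finset.mem_filter.mp hg with ⟨hgE, hvg⟩
      obtain ⟨u, hu⟩ := td.cover g hgE
      refine ⟨u, fun x hx => ?_⟩
      have hxv : x ≠ v := (Finset.mem_erase.mp hx).1
      exact (hmem u x hxv).mpr (Or.inr ⟨hu hvg, hx⟩)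
  · intro w
    by_cases hw : w = v
    · subst hw
      exact preconnected_of_empty _ (fun u => hvnotB u)
    by_cases hwm : w ∈ H.mergedEdge v
    · have hset : {u | w ∈ B u} = {u | w ∈ td.bags u} ∪ {u | v ∈ td.bags u} := by
        ext u
        simp only [Set.mem_setOf_eq, Set.mem_union, hmem u w hw]
        tauto
      rw [hset]
      -- find common point
      rcases Finset.mem_erase.mp hwm with ⟨-, hw2⟩
      rcases Finset.mem_biUnion.mp hw2 with ⟨g, hg, hwg⟩
      rcases Finset.mem_filter.mp hg with ⟨hgE, hvg⟩
      obtain ⟨u₀, hu₀⟩ := td.cover g hgE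
      exact preconnected_union td.T (td.link w) (td.link v) (hu₀ hwg) (hu₀ hvg)
    · have hset : {u | w ∈ B u} = {u | w ∈ td.bags u} := by
        ext u
        simp only [Set.mem_setOf_eq, hmem u w hw, hwm, and_false, or_false]
      rw [hset]
      exact td.link w
  · refine iSup_mono fun u => edgeCoverNum_mono_of ?_
    intro F hF hcov
    by_cases hFI : (F ∩ H.incident v).Nonempty
    · obtain ⟨g₀, hg₀⟩ := hFI
      rcases Finset.mem_inter.mp hg₀ with ⟨hg₀F, hg₀I⟩
      refine ⟨insert (H.mergedEdge v) (F \ H.incident v), ?_, ?_, ?_⟩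
      · intro g hg
        rcases Finset.mem_insert.mp hg with rfl | hg
        · exact Finset.mem_union_right _ (Finset.mem_singleton_self _)
        · rcases Finset.mem_sdiff.mp hg with ⟨h1, h2⟩
          exact Finset.mem_union_left _ (Finset.mem_sdiff.mpr ⟨hF h1, h2⟩)
      · calc (insert (H.mergedEdge v) (F \ H.incident v)).card
            ≤ (F \ H.incident v).card + 1 := Finset.card_insert_le _ _
          _ ≤ (F.erase g₀).card + 1 := by
              refine Nat.add_le_add_right (Finset.card_le_card ?_) 1
              intro g hg
              rcases Finset.mem_sdiff.mp hg with ⟨h1, h2⟩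
              exact Finset.mem_erase.mpr ⟨fun h => h2 (h ▸ hg₀I), h1⟩
          _ = F.card - 1 + 1 := by rw [Finset.card_erase_of_mem hg₀F]
          _ = F.card := Nat.succ_pred_eq_of_pos (Finset.card_pos.mpr ⟨g₀, hg₀F⟩)
      · intro x hx
        have hxB : x ∈ B u := hx
        have hxv : x ≠ v := fun h => hvnotB u (h ▸ hxB)
        rcases (hmem u x hxv).mp hxB with hxb | ⟨-, hxm⟩
        · rcases Finset.mem_biUnion.mp (hcov hxb) with ⟨g, hgF, hxg⟩
          by_cases hgv : v ∈ g
          · refine Finset.mem_biUnion.mpr ⟨H.mergedEdge v, Finset.mem_insert_self _ _, ?_⟩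
            exact Finset.mem_erase.mpr ⟨hxv, Finset.mem_biUnion.mpr
              ⟨g, Finset.mem_filter.mpr ⟨hF hgF, hgv⟩, hxg⟩⟩
          · refine Finset.mem_biUnion.mpr ⟨g, Finset.mem_insert_of_mem
              (Finset.mem_sdiff.mpr ⟨hgF, fun h => hgv (Finset.mem_filter.mp h).2⟩), hxg⟩
        · exact Finset.mem_biUnion.mpr ⟨H.mergedEdge v, Finset.mem_insert_self _ _, hxm⟩
    · have hvb : v ∉ td.bags u := by
        intro hv
        rcases Finset.mem_biUnion.mp (hcov hv) with ⟨g, hgF, hvg⟩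
        exact hFI ⟨g, Finset.mem_inter.mpr ⟨hgF, Finset.mem_filter.mpr ⟨hF hgF, hvg⟩⟩⟩
      refine ⟨F, ?_, le_refl _, ?_⟩
      · intro g hg
        refine Finset.mem_union_left _ (Finset.mem_sdiff.mpr ⟨hF hg, fun h => ?_⟩)
        exact hFI ⟨g, Finset.mem_inter.mpr ⟨hg, h⟩⟩
      · intro x hx
        have hxB : x ∈ B u := hx
        rw [hB] at hxB
        simp only [hvb, if_neg, if_false] at hxB
        exact hcov hxB


lemma ghw_le_of_iso (K : Hypergraph α) (H : Hypergraph β) (hiso : K.Isomorphic H) :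
    ghw H ≤ ghw K := by
  classical
  obtain ⟨φ, hv, he⟩ := hiso
  refine le_iInf fun td => ?_
  set B : td.ι → Finset β := fun u => (td.bags u).image φ with hB
  refine iInf_le_of_le ⟨td.ι, td.T, td.isTree, B, ?_, ?_, ?_⟩ ?_
  · intro u x hx
    rcases Finset.mem_image.mp hx with ⟨a, ha, rfl⟩
    exact hv.mapsTo (td.bags_sub u ha)
  · intro e heH
    obtain ⟨f, hfK, hfe⟩ := he.surjOn heH
    obtain ⟨u, hu⟩ := td.cover f hfK
    refine ⟨u, ?_⟩
    rw [← hfe]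
    exact Finset.image_subset_image hu
  · intro w
    by_cases hw : ∃ a, a ∈ K.verts ∧ φ a = w ∧ ∃ u, a ∈ td.bags u
    · obtain ⟨a, haK, rfl, -⟩ := hw
      have hset : {u | φ a ∈ B u} = {u | a ∈ td.bags u} := by
        ext u
        simp only [Set.mem_setOf_eq, hB, Finset.mem_image]
        constructor
        · rintro ⟨a', ha', heq⟩
          have : a' = a := hv.injOn (td.bags_sub u ha') haK heq
          exact this ▸ ha'
        · exact fun h => ⟨a, h, rfl⟩
      rw [hset]
      exact td.link a
    · refine preconnected_of_empty _ fun u hu => ?_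
      rcases Finset.mem_image.mp hu with ⟨a, ha, rfl⟩
      exact hw ⟨a, td.bags_sub u ha, rfl, u, ha⟩
  · refine iSup_mono fun u => edgeCoverNum_mono_of ?_
    intro F hF hcov
    refine ⟨F.image (fun e => e.image φ), ?_, Finset.card_image_le, ?_⟩
    · intro g hg
      rcases Finset.mem_image.mp hg with ⟨f, hf, rfl⟩
      exact he.mapsTo (hF hf)
    · intro x hx
      rcases Finset.mem_image.mp hx with ⟨a, ha, rfl⟩
      rcases Finset.mem_biUnion.mp (hcov ha) with ⟨f, hf, haf⟩
      exact Finset.mem_biUnion.mpr ⟨f.image φ, Finset.mem_image.mpr ⟨f, hf, rfl⟩,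
        Finset.mem_image_of_mem φ haf⟩


lemma ghw_step_le {G G' : Hypergraph α} (h : Step G G') : ghw G' ≤ ghw G := by
  cases h with
  | deleteVertex v hv => exact ghw_deleteVertex_le G v
  | deleteSubedge f e hf he hfe => exact ghw_deleteEdge_le G f e he hfe
  | merge v hv hne => exact ghw_merge_le G v hne

/-- If `H'` dilutes to `H`, then `ghw(H) ≤ ghw(H')`. -/
theorem dilutesTo_ghw_le (H' : Hypergraph α) (H : Hypergraph β)
    (h : H'.DilutesTo H) : ghw H ≤ ghw H' := by
  obtain ⟨K, hsteps, hiso⟩ := h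
  refine le_trans (ghw_le_of_iso K H hiso) ?_
  clear hiso
  induction hsteps with
  | refl => exact le_refl _
  | tail _ hstep ih => exact le_trans (ghw_step_le hstep) ih

end Hypergraph

end DilutionPaper
end

section
/- Let H be a hypergraph and v ∈ V(H), and let H' be the hypergraph obtained from H by merging on v, i.e., by replacing all edges incident to v by the single new edge (⋃_{e ∈ I_v} e) \ {v} (and removing v from the vertex set). Then ghw(H') ≤ ghw(H). -/
namespace DilutionPaper

universe u v w

variable {α : Type u} {β : Type v} {γ : Type w}
variable [DecidableEq α] [DecidableEq β] [DecidableEq γ]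

namespace Hypergraph

private lemma reach_mono {ι : Type} {G : SimpleGraph ι} {U W : Set ι} (hUW : U ⊆ W)
    {a b : ι} (ha : a ∈ U) (hb : b ∈ U)
    (h : (G.induce U).Reachable ⟨a, ha⟩ ⟨b, hb⟩) :
    (G.induce W).Reachable ⟨a, hUW ha⟩ ⟨b, hUW hb⟩ := by
  exact h.map (⟨fun x => ⟨x.1, hUW x.2⟩, fun h => h⟩ : G.induce U →g G.induce W)

private lemma induce_union_preconnected {ι : Type} {G : SimpleGraph ι} {S T : Set ι}
    (hS : (G.induce S).Preconnected) (hT : (G.induce T).Preconnected)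
    {z : ι} (hzS : z ∈ S) (hzT : z ∈ T) :
    (G.induce (S ∪ T)).Preconnected := by
  have key : ∀ a (ha : a ∈ S ∪ T),
      (G.induce (S ∪ T)).Reachable ⟨a, ha⟩ ⟨z, Or.inl hzS⟩ := by
    intro a ha
    rcases ha with haS | haT
    · exact reach_mono Set.subset_union_left haS hzS (hS ⟨a, haS⟩ ⟨z, hzS⟩)
    · exact reach_mono Set.subset_union_right haT hzT (hT ⟨a, haT⟩ ⟨z, hzT⟩)
  rintro ⟨a, ha⟩ ⟨b, hb⟩
  exact (key a ha).trans (key b hb).symm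

private lemma edgeCoverNum_merge_le (H : Hypergraph α) (vtx : α) (S : Finset α) :
    edgeCoverNum (H.merge vtx)
      (S.erase vtx ∪ (if vtx ∈ S then H.mergedEdge vtx else ∅))
      ≤ edgeCoverNum H S := by
  classical
  apply le_sInf
  rintro k ⟨F, hFsub, rfl, hcov⟩
  set F' := F.image (fun e => if vtx ∈ e then H.mergedEdge vtx else e) with hF'
  have hsub : F' ⊆ (H.merge vtx).edges := by
    intro e he
    rcases Finset.mem_image.mp he with ⟨f, hf, rfl⟩
    by_cases h : vtx ∈ f
    · simp only [h, if_true]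
      exact Finset.mem_union_right _ (Finset.mem_singleton_self _)
    · simp only [h, if_false]
      refine Finset.mem_union_left _ (Finset.mem_sdiff.mpr ⟨hFsub hf, ?_⟩)
      intro hmem
      exact h (Finset.mem_filter.mp hmem).2
  have hcov' : S.erase vtx ∪ (if vtx ∈ S then H.mergedEdge vtx else ∅)
      ⊆ F'.biUnion id := by
    intro x hx
    rcases Finset.mem_union.mp hx with hx | hx
    · obtain ⟨hxne, hxS⟩ := Finset.mem_erase.mp hx
      obtain ⟨e, he, hxe⟩ := Finset.mem_biUnion.mp (hcov hxS)
      by_cases h : vtx ∈ e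
      · refine Finset.mem_biUnion.mpr ⟨H.mergedEdge vtx,
          Finset.mem_image.mpr ⟨e, he, by simp [h]⟩, ?_⟩
        exact Finset.mem_erase.mpr ⟨hxne, Finset.mem_biUnion.mpr
          ⟨e, Finset.mem_filter.mpr ⟨hFsub he, h⟩, hxe⟩⟩
      · exact Finset.mem_biUnion.mpr ⟨e, Finset.mem_image.mpr ⟨e, he, by simp [h]⟩, hxe⟩
    · split_ifs at hx with h
      · obtain ⟨e, he, hve⟩ := Finset.mem_biUnion.mp (hcov h)
        exact Finset.mem_biUnion.mpr ⟨H.mergedEdge vtx,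
          Finset.mem_image.mpr ⟨e, he, by simp only [if_pos (show vtx ∈ e from hve)]⟩, hx⟩
      · simp at hx
  refine le_trans (sInf_le ⟨F', hsub, rfl, hcov'⟩) ?_
  exact_mod_cast Finset.card_image_le

/-- Merging on a vertex does not increase generalised hypertree width. -/
theorem merge_ghw_le (H : Hypergraph α) (vtx : α) (hv : vtx ∈ H.verts) :
    ghw (H.merge vtx) ≤ ghw H := by
  classical
  apply le_iInf
  intro td
  -- the merged edge sits inside the erased vertex set
  have hmerged_sub : H.mergedEdge vtx ⊆ H.verts.erase vtx := by
    intro x hx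
    obtain ⟨hx1, hx2⟩ := Finset.mem_erase.mp hx
    rcases Finset.mem_biUnion.mp hx2 with ⟨f, hf, hxf⟩
    exact Finset.mem_erase.mpr ⟨hx1, H.valid f (Finset.mem_filter.mp hf).1 hxf⟩
  have hvne : vtx ∉ H.mergedEdge vtx := fun h => (Finset.mem_erase.mp h).1 rfl
  let nb : td.ι → Finset α := fun u =>
    (td.bags u).erase vtx ∪ (if vtx ∈ td.bags u then H.mergedEdge vtx else ∅)
  have hnb : ∀ w u, w ∈ nb u ↔
      (w ∈ td.bags u ∧ w ≠ vtx) ∨ (vtx ∈ td.bags u ∧ w ∈ H.mergedEdge vtx) := by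
    intro w u
    simp only [nb, Finset.mem_union, Finset.mem_erase]
    split_ifs with h <;> simp [h, and_comm]
  let td' : TreeDecomp (H.merge vtx) :=
    { ι := td.ι
      T := td.T
      isTree := td.isTree
      bags := nb
      bags_sub := by
        intro u x hx
        rcases (hnb x u).mp hx with ⟨h1, h2⟩ | ⟨_, h2⟩
        · exact Finset.mem_erase.mpr ⟨h2, td.bags_sub u h1⟩
        · exact hmerged_sub h2
      cover := by
        intro e he
        rcases Finset.mem_union.mp he with he | he
        · obtain ⟨heE, heI⟩ := Finset.mem_sdiff.mp he
          obtain ⟨u, hu⟩ := td.cover e heE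
          refine ⟨u, fun x hx => (hnb x u).mpr (Or.inl ⟨hu hx, ?_⟩)⟩
          rintro rfl
          exact heI (Finset.mem_filter.mpr ⟨heE, hx⟩)
        · rw [Finset.mem_singleton] at he
          subst he
          by_cases hne : (H.incident vtx).Nonempty
          · obtain ⟨f, hf⟩ := hne
            obtain ⟨u, hu⟩ := td.cover f (Finset.mem_filter.mp hf).1
            refine ⟨u, fun x hx => (hnb x u).mpr (Or.inr ⟨hu (Finset.mem_filter.mp hf).2, hx⟩)⟩
          · have : H.mergedEdge vtx = ∅ := by
              rw [Finset.not_nonempty_iff_eq_empty] at hne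
              simp [mergedEdge, hne]
            obtain ⟨u⟩ := td.isTree.isConnected.nonempty
            exact ⟨u, by simp [this]⟩
      link := by
        intro w
        by_cases hwm : w ∈ H.mergedEdge vtx
        · have hwv : w ≠ vtx := fun h => hvne (h ▸ hwm)
          have hset : {u | w ∈ nb u} = {u | w ∈ td.bags u} ∪ {u | vtx ∈ td.bags u} := by
            ext u
            simp only [Set.mem_setOf_eq, Set.mem_union, hnb w u]
            constructor
            · rintro (⟨h1, _⟩ | ⟨h1, _⟩)
              · exact Or.inl h1
              · exact Or.inr h1
            · rintro (h1 | h1)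
              · exact Or.inl ⟨h1, hwv⟩
              · exact Or.inr ⟨h1, hwm⟩
          rw [hset]
          -- find a common node: an edge incident to vtx containing w
          obtain ⟨hw1, hw2⟩ := Finset.mem_erase.mp hwm
          rcases Finset.mem_biUnion.mp hw2 with ⟨f, hf, hwf⟩
          obtain ⟨u0, hu0⟩ := td.cover f (Finset.mem_filter.mp hf).1
          exact induce_union_preconnected (td.link w) (td.link vtx)
            (hu0 hwf) (hu0 (Finset.mem_filter.mp hf).2)
        · by_cases hwv : w = vtx
          · subst hwv
            have hset : {u | w ∈ nb u} = (∅ : Set td.ι) := by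
              ext u
              simp only [Set.mem_setOf_eq, Set.mem_empty_iff_false, iff_false, hnb w u]
              rintro (⟨_, h⟩ | ⟨_, h⟩)
              · exact h rfl
              · exact hwm h
            rw [hset]
            rintro ⟨u, hu⟩
            exact absurd hu (Set.notMem_empty u)
          · have hset : {u | w ∈ nb u} = {u | w ∈ td.bags u} := by
              ext u
              simp only [Set.mem_setOf_eq, hnb w u]
              constructor
              · rintro (⟨h1, _⟩ | ⟨_, h⟩)
                · exact h1
                · exact absurd h hwm
              · intro h1
                exact Or.inl ⟨h1, hwv⟩
            rw [hset]
            exact td.link w }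
  refine iInf_le_of_le td' ?_
  simp only [TreeDecomp.ghwWidth]
  apply iSup_le
  intro u
  exact le_trans (edgeCoverNum_merge_le H vtx (td.bags u))
    (le_iSup (fun u => edgeCoverNum H (td.bags u)) u)

end Hypergraph

end DilutionPaper
end

section
/- Let G be a connected graph and let H be a hypergraph of degree at most 2. If G is a minor of the dual hypergraph H^d (i.e., of the primal graph of H^d), then the dual hypergraph G^d is a hypergraph dilution of H. -/
/-!
Let `μ` be the minor map. As `H` has degree at most 2, two adjacent vertices `a`, `b` of `H^d`
are exactly the two edges at some vertex `v` of `H`. Hence every edge `xy` of `G` has a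
connector `v`, all of whose edges lie in `μ x ∪ μ y` and which meets both, and every branch set
`μ x` is connected through link vertices, all of whose edges lie in `μ x`. Keep one connector
per edge of `G` together with the link vertices and delete all other vertices. Merging on the
link vertices then fuses the edges of each `μ x` into a single edge, the set of connectors at
`x`; the edges outside the branch sets have become empty and are deleted as subedges. Sending a
connector to the set of branch sets it touches, which is its edge of `G`, identifies the result
with `G^d`.
-/

namespace DilutionPaper

universe u v w

variable {α : Type u} {β : Type v} {γ : Type w}
variable [DecidableEq α] [DecidableEq β] [DecidableEq γ]

namespace Hypergraph

open Relation

lemma mem_incident {K : Hypergraph α} {v : α} {e : Finset α} :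
    e ∈ K.incident v ↔ e ∈ K.edges ∧ v ∈ e :=
  Finset.mem_filter

theorem exists_reflTransGen_deleteVertices (K : Hypergraph α) {D : Finset α}
    (hD : D ⊆ K.verts) :
    ∃ K', ReflTransGen Step K K' ∧ K'.verts = K.verts \ D ∧
      K'.edges = K.edges.image (· \ D) := by
  induction D using Finset.induction_on generalizing K with
  | empty => exact ⟨K, .refl, by simp, by simp⟩
  | insert a D ha ih =>
    obtain ⟨K', hK', hv, he⟩ := ih (K.deleteVertex a) fun d hd =>
      Finset.mem_erase.2 ⟨fun h => ha (h ▸ hd), hD (Finset.mem_insert_of_mem hd)⟩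
    refine ⟨K', .head (.deleteVertex K a (hD (Finset.mem_insert_self a D))) hK', ?_, ?_⟩
    · rw [hv, Finset.sdiff_insert]
      exact Finset.erase_sdiff_comm _ _ _
    · rw [he]
      simp only [deleteVertex, Finset.image_image, Function.comp_def, Finset.sdiff_insert,
        Finset.erase_sdiff_comm]

theorem exists_reflTransGen_restrict (K : Hypergraph α) (W : Finset α) :
    ∃ K', ReflTransGen Step K K' ∧ K'.verts = K.verts ∩ W ∧
      K'.edges = K.edges.image (· ∩ W) := by
  obtain ⟨K', hK', hv, he⟩ := K.exists_reflTransGen_deleteVertices (D := K.verts \ W)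
    Finset.sdiff_subset
  refine ⟨K', hK', by rw [hv, sdiff_sdiff_right_self]; rfl, ?_⟩
  rw [he]
  refine Finset.image_congr fun e he => ?_
  ext u
  have := @K.valid e he u
  simp only [Finset.mem_sdiff, Finset.mem_inter]
  tauto

theorem exists_reflTransGen_edges_eq_of_subset_insert_empty (K : Hypergraph α)
    {S : Finset (Finset α)} (hS : S ⊆ K.edges) (hK : K.edges ⊆ insert ∅ S)
    (hne : S.Nonempty) :
    ∃ K', ReflTransGen Step K K' ∧ K'.verts = K.verts ∧ K'.edges = S := by
  by_cases h : ∅ ∈ K.edges ∧ ∅ ∉ S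
  · obtain ⟨e, he⟩ := hne
    have hsub : (∅ : Finset α) ⊂ e :=
      Finset.empty_ssubset.2 (Finset.nonempty_iff_ne_empty.2 fun h' => h.2 (h' ▸ he))
    refine ⟨K.deleteEdge ∅, .single (.deleteSubedge K ∅ e h.1 (hS he) hsub), rfl, ?_⟩
    ext f
    simp only [deleteEdge, Finset.mem_erase]
    refine ⟨fun ⟨hf0, hf⟩ => (Finset.mem_insert.1 (hK hf)).resolve_left hf0,
      fun hf => ⟨?_, hS hf⟩⟩
    rintro rfl
    exact h.2 hf
  · refine ⟨K, .refl, rfl, Finset.Subset.antisymm (fun f hf => ?_) hS⟩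
    rcases Finset.mem_insert.1 (hK hf) with rfl | hf'
    · by_contra h0
      exact h ⟨hf, h0⟩
    · exact hf'

theorem isomorphic_of_bijOn {K : Hypergraph α} {M : Hypergraph β} {φ : α → β}
    (hv : Set.BijOn φ K.verts M.verts) (he : K.edges.image (·.image φ) = M.edges) :
    K.Isomorphic M := by
  refine ⟨φ, hv, fun e he' => ?_, fun e he' f hf hef => ?_, fun f hf => ?_⟩
  · rw [Finset.mem_coe, ← he]
    exact Finset.mem_image_of_mem _ he'
  · have := congrArg ((↑) : Finset β → Set β) hef
    simp only [Finset.coe_image] at this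
    exact Finset.coe_injective <| (hv.injOn.image_eq_image_iff (K.valid e he')
      (K.valid f hf)).1 this
  · rw [Finset.mem_coe, ← he, Finset.mem_image] at hf
    exact hf

section Labelling

/- Along a sequence of merges the edges are tracked as a labelling `E : τ → Finset α` of a fixed
label set `T` (initially the edges themselves): merging on `w` only relabels, so edges that
happen to coincide never need separate treatment. -/

variable {τ : Type*}

def mergeLabel (T : Finset τ) (E : τ → Finset α) (w : α) (t : τ) : Finset α :=
  if w ∈ E t then ((T.filter fun s => w ∈ E s).biUnion E).erase w else E t

lemma mem_mergeLabel {T : Finset τ} {E : τ → Finset α} {w u : α} {t : τ} (ht : t ∈ T) :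
    u ∈ mergeLabel T E w t ↔
      u ≠ w ∧ (u ∈ E t ∨ w ∈ E t ∧ ∃ s ∈ T, w ∈ E s ∧ u ∈ E s) := by
  unfold mergeLabel
  split_ifs with hw
  · simp only [Finset.mem_erase, Finset.mem_biUnion, Finset.mem_filter]
    grind
  · grind

lemma merge_edges_eq_image {K : Hypergraph α} {T : Finset τ} {E : τ → Finset α} {w : α}
    (hK : K.edges = T.image E) (hw : ∃ t ∈ T, w ∈ E t) :
    (K.merge w).edges = T.image (mergeLabel T E w) := by
  have hI : K.incident w = (T.filter fun s => w ∈ E s).image E := by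
    rw [incident, hK, Finset.filter_image]
  have hm : K.mergedEdge w = ((T.filter fun s => w ∈ E s).biUnion E).erase w := by
    rw [mergedEdge, hI, Finset.image_biUnion]
    rfl
  ext e
  simp only [merge, hm, hI, hK, mergeLabel, Finset.mem_union, Finset.mem_sdiff,
    Finset.mem_image, Finset.mem_filter, Finset.mem_singleton]
  grind

def Linked (T : Finset τ) (E : τ → Finset α) (L : Finset α) (s t : τ) : Prop :=
  s ∈ T ∧ t ∈ T ∧ (E s = E t ∨ ∃ w ∈ L, w ∈ E s ∧ w ∈ E t)

lemma Linked.mergeLabel {T : Finset τ} {E : τ → Finset α} {L : Finset α} {w : α} {s t : τ}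
    (hwL : w ∉ L) (h : Linked T E (insert w L) s t) :
    Linked T (mergeLabel T E w) L s t := by
  obtain ⟨hs, ht, hst | ⟨u, hu, hus, hut⟩⟩ := h
  · exact ⟨hs, ht, .inl (by simp only [Hypergraph.mergeLabel, hst])⟩
  · refine ⟨hs, ht, ?_⟩
    rcases Finset.mem_insert.1 hu with rfl | hu
    · exact .inl (by simp only [Hypergraph.mergeLabel, if_pos hus, if_pos hut])
    · have huw : u ≠ w := fun h => hwL (h ▸ hu)
      exact .inr ⟨u, hu, (mem_mergeLabel hs).2 ⟨huw, .inl hus⟩,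
        (mem_mergeLabel ht).2 ⟨huw, .inl hut⟩⟩

lemma exists_cls_eq_of_mem_mergeLabel {ι : Type*} {T : Finset τ} {E : τ → Finset α} {cls : τ → ι}
    {w u : α} (hw : ∀ s ∈ T, ∀ t ∈ T, w ∈ E s → w ∈ E t → cls s = cls t) {t : τ}
    (ht : t ∈ T) (hu : u ∈ mergeLabel T E w t) : ∃ s ∈ T, u ∈ E s ∧ cls s = cls t := by
  obtain ⟨-, hut | ⟨hwt, s, hs, hws, hus⟩⟩ := (mem_mergeLabel ht).1 hu
  exacts [⟨t, ht, hut, rfl⟩, ⟨s, hs, hus, hw s hs t ht hws hwt⟩]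

variable {ι : Type*} [DecidableEq ι]

lemma biUnion_filter_eq_of_reflTransGen_linked {T : Finset τ} {E : τ → Finset α} {cls : τ → ι}
    (hconn : ∀ s ∈ T, ∀ t ∈ T, cls s = cls t → ReflTransGen (Linked T E ∅) s t) {t : τ}
    (ht : t ∈ T) : (T.filter fun s => cls s = cls t).biUnion E = E t := by
  have hE : ∀ {a b}, ReflTransGen (Linked T E ∅) a b → E a = E b := by
    intro a b h
    induction h with
    | refl => rfl
    | tail _ h ih => exact ih.trans (by simpa [Linked] using h.2.2)
  ext u
  simp only [Finset.mem_biUnion, Finset.mem_filter]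
  exact ⟨fun ⟨s, ⟨hs, hst⟩, hu⟩ => hE (hconn s hs t ht hst) ▸ hu, fun hu => ⟨t, ⟨ht, rfl⟩, hu⟩⟩

lemma biUnion_filter_mergeLabel_sdiff {T : Finset τ} {E : τ → Finset α} {cls : τ → ι}
    {w : α} (hw : ∀ s ∈ T, ∀ t ∈ T, w ∈ E s → w ∈ E t → cls s = cls t) (L : Finset α) (c : ι) :
    (T.filter fun s => cls s = c).biUnion (mergeLabel T E w) \ L =
      (T.filter fun s => cls s = c).biUnion E \ insert w L := by
  ext u
  simp only [Finset.mem_sdiff, Finset.mem_insert, Finset.mem_biUnion, Finset.mem_filter,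
    not_or]
  constructor
  · rintro ⟨⟨s, ⟨hs, rfl⟩, hus⟩, huL⟩
    obtain ⟨s', hs', hus', hss'⟩ := exists_cls_eq_of_mem_mergeLabel hw hs hus
    exact ⟨⟨s', ⟨hs', hss'⟩, hus'⟩, ((mem_mergeLabel hs).1 hus).1, huL⟩
  · rintro ⟨⟨s, ⟨hs, hsc⟩, hus⟩, huw, huL⟩
    exact ⟨⟨s, ⟨hs, hsc⟩, (mem_mergeLabel hs).2 ⟨huw, .inl hus⟩⟩, huL⟩

theorem exists_reflTransGen_mergeVertices (K : Hypergraph α) (T : Finset τ) (E : τ → Finset α)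
    (cls : τ → ι) (L : Finset α) (hK : K.edges = T.image E) (hL : L ⊆ K.verts)
    (hocc : ∀ w ∈ L, ∃ t ∈ T, w ∈ E t)
    (hcls : ∀ w ∈ L, ∀ s ∈ T, ∀ t ∈ T, w ∈ E s → w ∈ E t → cls s = cls t)
    (hconn : ∀ s ∈ T, ∀ t ∈ T, cls s = cls t → ReflTransGen (Linked T E L) s t) :
    ∃ K', ReflTransGen Step K K' ∧ K'.verts = K.verts \ L ∧
      K'.edges = T.image fun t => (T.filter fun s => cls s = cls t).biUnion E \ L := by
  induction L using Finset.induction_on generalizing K E with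
  | empty =>
    refine ⟨K, .refl, by simp, hK.trans (Finset.image_congr fun t ht => ?_)⟩
    rw [Finset.sdiff_empty, biUnion_filter_eq_of_reflTransGen_linked hconn ht]
  | insert w L hwL ih =>
    have hwwL := Finset.mem_insert_self w L
    have hLwL : L ⊆ insert w L := Finset.subset_insert w L
    obtain ⟨t₀, ht₀, hwt₀⟩ := hocc w hwwL
    have hstep : Step K (K.merge w) := .merge K w (hL hwwL)
      ⟨E t₀, mem_incident.2 ⟨hK ▸ Finset.mem_image_of_mem E ht₀, hwt₀⟩⟩
    obtain ⟨K', hK', hv, he⟩ := ih (K.merge w) (mergeLabel T E w)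
      (merge_edges_eq_image hK ⟨t₀, ht₀, hwt₀⟩)
      (fun u hu => Finset.mem_erase.2 ⟨fun h => hwL (h ▸ hu), hL (hLwL hu)⟩)
      (fun u hu => by
        obtain ⟨t, ht, hut⟩ := hocc u (hLwL hu)
        exact ⟨t, ht, (mem_mergeLabel ht).2 ⟨fun h => hwL (h ▸ hu), .inl hut⟩⟩)
      (fun u hu s hs t ht hus hut => by
        obtain ⟨s', hs', hus', hss'⟩ := exists_cls_eq_of_mem_mergeLabel (hcls w hwwL) hs hus
        obtain ⟨t', ht', hut', htt'⟩ := exists_cls_eq_of_mem_mergeLabel (hcls w hwwL) ht hut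
        rw [← hss', ← htt']
        exact hcls u (hLwL hu) s' hs' t' ht' hus' hut')
      (fun s hs t ht hst =>
        ReflTransGen.mono (fun _ _ => Linked.mergeLabel hwL) _ _ (hconn s hs t ht hst))
    refine ⟨K', .head hstep hK', ?_, ?_⟩
    · rw [hv, Finset.sdiff_insert]
      exact Finset.erase_sdiff_comm _ _ _
    · rw [he]
      exact Finset.image_congr fun t _ => biUnion_filter_mergeLabel_sdiff (hcls w hwwL) L _

end Labelling

lemma exists_incident_eq_pair_of_dual_adj {H : Hypergraph α} (hH : H.degree ≤ 2)
    {a b : Finset α} (h : H.dual.Adj a b) : ∃ v ∈ H.verts, H.incident v = {a, b} := by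
  obtain ⟨hab, _, hed, ha, hb⟩ := h
  obtain ⟨v, hv, rfl⟩ := Finset.mem_image.1 hed
  refine ⟨v, hv, (Finset.eq_of_subset_of_card_le
    (Finset.insert_subset_iff.2 ⟨ha, Finset.singleton_subset_iff.2 hb⟩) ?_).symm⟩
  rw [Finset.card_pair hab]
  exact (Finset.le_sup (f := fun u => (H.incident u).card) hv).trans hH

section BranchSets

def linkVerts (H : Hypergraph α) (G : Hypergraph γ) (μ : γ → Finset (Finset α)) : Finset α :=
  H.verts.filter fun w => (H.incident w).Nonempty ∧ ∃ x ∈ G.verts, H.incident w ⊆ μ x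

variable (G : Hypergraph γ) (μ : γ → Finset (Finset α))

def owners (e : Finset α) : Finset γ := G.verts.filter fun x => e ∈ μ x

def touched (v : α) : Finset γ := G.verts.filter fun x => ∃ e ∈ μ x, v ∈ e

def connectorsAt (S : Finset α) (x : γ) : Finset α := S.filter fun v => x ∈ G.touched μ v

variable {G μ} {H : Hypergraph α}

lemma IsMinorMap.subset_edges (hμ : IsMinorMap G H.dual μ) {x : γ} (hx : x ∈ G.verts) :
    μ x ⊆ H.edges :=
  (hμ.1 x hx).2.1

lemma IsMinorMap.eq_of_mem_of_mem (hμ : IsMinorMap G H.dual μ) {x z : γ} (hx : x ∈ G.verts)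
    (hz : z ∈ G.verts) {e : Finset α} (hex : e ∈ μ x) (hez : e ∈ μ z) : x = z := by
  by_contra hxz
  exact Finset.notMem_empty e (hμ.2.1 x hx z hz hxz ▸ Finset.mem_inter.2 ⟨hex, hez⟩)

lemma IsMinorMap.owners_eq_singleton (hμ : IsMinorMap G H.dual μ) {x : γ} (hx : x ∈ G.verts)
    {e : Finset α} (he : e ∈ μ x) : G.owners μ e = {x} := by
  ext z
  simp only [owners, Finset.mem_filter, Finset.mem_singleton]
  exact ⟨fun ⟨hz, hez⟩ => hμ.eq_of_mem_of_mem hz hx hez he, by rintro rfl; exact ⟨hx, he⟩⟩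

lemma IsMinorMap.filter_owners_eq (hμ : IsMinorMap G H.dual μ) {x : γ} (hx : x ∈ G.verts)
    {e : Finset α} (he : e ∈ μ x) :
    H.edges.filter (fun s => G.owners μ s = G.owners μ e) = μ x := by
  ext s
  rw [Finset.mem_filter, hμ.owners_eq_singleton hx he]
  refine ⟨fun ⟨_, hs⟩ => ?_, fun hs => ⟨hμ.subset_edges hx hs, hμ.owners_eq_singleton hx hs⟩⟩
  exact (Finset.mem_filter.1 (hs ▸ Finset.mem_singleton_self x : x ∈ G.owners μ s)).2

lemma IsMinorMap.touched_subset_singleton (hμ : IsMinorMap G H.dual μ) {x : γ}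
    (hx : x ∈ G.verts) {w : α} (hw : H.incident w ⊆ μ x) : G.touched μ w ⊆ {x} := by
  intro z hz
  obtain ⟨hz, e, hez, hwe⟩ := Finset.mem_filter.1 hz
  exact Finset.mem_singleton.2
    (hμ.eq_of_mem_of_mem hz hx hez (hw (mem_incident.2 ⟨hμ.subset_edges hz hez, hwe⟩)))

lemma IsMinorMap.exists_connector (hG : G.IsGraph) (hH : H.degree ≤ 2)
    (hμ : IsMinorMap G H.dual μ) {f : Finset γ} (hf : f ∈ G.edges) :
    ∃ v ∈ H.verts, (∀ e ∈ H.incident v, ∃ x ∈ G.verts, e ∈ μ x) ∧ G.touched μ v = f := by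
  obtain ⟨x, y, hxy, rfl⟩ := Finset.card_eq_two.1 (hG f hf)
  have hx := G.valid _ hf (Finset.mem_insert_self x {y})
  have hy := G.valid _ hf (Finset.mem_insert_of_mem (Finset.mem_singleton_self y))
  obtain ⟨a, ha, b, hb, hab⟩ := hμ.2.2 x y ⟨hxy, _, hf, by simp, by simp⟩
  obtain ⟨v, hv, hI⟩ := exists_incident_eq_pair_of_dual_adj hH hab
  have hvI : ∀ e, e ∈ H.edges ∧ v ∈ e ↔ e = a ∨ e = b := fun e => by
    rw [← mem_incident, hI, Finset.mem_insert, Finset.mem_singleton]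
  refine ⟨v, hv, fun e he => ?_, ?_⟩
  · rcases (hvI e).1 (mem_incident.1 he) with rfl | rfl
    exacts [⟨x, hx, ha⟩, ⟨y, hy, hb⟩]
  · ext z
    simp only [touched, Finset.mem_filter, Finset.mem_insert, Finset.mem_singleton]
    constructor
    · rintro ⟨hz, e, hez, hve⟩
      rcases (hvI e).1 ⟨hμ.subset_edges hz hez, hve⟩ with rfl | rfl
      exacts [.inl (hμ.eq_of_mem_of_mem hz hx hez ha), .inr (hμ.eq_of_mem_of_mem hz hy hez hb)]
    · rintro (rfl | rfl)
      exacts [⟨hx, a, ha, ((hvI a).2 (.inl rfl)).2⟩, ⟨hy, b, hb, ((hvI b).2 (.inr rfl)).2⟩]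

lemma IsMinorMap.exists_connectors (hG : G.IsGraph) (hH : H.degree ≤ 2)
    (hμ : IsMinorMap G H.dual μ) :
    ∃ S ⊆ H.verts, (∀ v ∈ S, ∀ e ∈ H.incident v, ∃ x ∈ G.verts, e ∈ μ x) ∧
      Set.BijOn (G.touched μ) S G.edges := by
  have hsurj : Set.SurjOn (G.touched μ)
      (H.verts.filter fun v => ∀ e ∈ H.incident v, ∃ x ∈ G.verts, e ∈ μ x) G.edges := by
    intro f hf
    obtain ⟨v, hv, hcov, rfl⟩ := hμ.exists_connector hG hH hf
    exact ⟨v, Finset.mem_filter.2 ⟨hv, hcov⟩, rfl⟩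
  obtain ⟨S, hS, hinj, himg⟩ := hsurj.exists_subset_injOn_image_eq
  obtain ⟨S, rfl⟩ := ((Finset.finite_toSet _).subset hS).exists_finset_coe
  exact ⟨S, fun v hv => (Finset.mem_filter.1 (hS hv)).1,
    fun v hv => (Finset.mem_filter.1 (hS hv)).2, himg ▸ hinj.bijOn_image⟩

lemma image_connectorsAt {S : Finset α} (hS : Set.BijOn (G.touched μ) S G.edges) (x : γ) :
    (G.connectorsAt μ S x).image (G.touched μ) = G.incident x := by
  have : S.image (G.touched μ) = G.edges := Finset.coe_injective (by simpa using hS.image_eq)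
  rw [connectorsAt, ← Finset.filter_image (p := fun f => x ∈ f), this]
  rfl

lemma IsMinorMap.notMem_linkVerts (hG : G.IsGraph) (hμ : IsMinorMap G H.dual μ) {S : Finset α}
    (hS : Set.BijOn (G.touched μ) S G.edges) {v : α} (hv : v ∈ S) : v ∉ H.linkVerts G μ := by
  intro hl
  obtain ⟨-, -, x, hx, hsub⟩ := Finset.mem_filter.1 hl
  have h2 := hG _ (hS.mapsTo hv)
  have h1 := Finset.card_le_card (hμ.touched_subset_singleton hx hsub)
  rw [Finset.card_singleton] at h1
  omega

lemma IsMinorMap.owners_eq_of_mem_linkVerts (hμ : IsMinorMap G H.dual μ) {w : α}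
    (hw : w ∈ H.linkVerts G μ) {s t : Finset α} (hs : s ∈ H.edges) (ht : t ∈ H.edges)
    (hws : w ∈ s) (hwt : w ∈ t) : G.owners μ s = G.owners μ t := by
  obtain ⟨-, -, x, hx, hsub⟩ := Finset.mem_filter.1 hw
  rw [hμ.owners_eq_singleton hx (hsub (mem_incident.2 ⟨hs, hws⟩)),
    hμ.owners_eq_singleton hx (hsub (mem_incident.2 ⟨ht, hwt⟩))]

lemma inter_eq_empty_of_owners_eq_empty {S : Finset α}
    (hScov : ∀ v ∈ S, ∀ e ∈ H.incident v, ∃ x ∈ G.verts, e ∈ μ x) {e : Finset α}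
    (he : e ∈ H.edges) (hown : G.owners μ e = ∅) : e ∩ (S ∪ H.linkVerts G μ) = ∅ := by
  have hfree : ∀ x ∈ G.verts, e ∉ μ x := Finset.filter_eq_empty_iff.1 hown
  refine Finset.eq_empty_of_forall_notMem fun u hu => ?_
  obtain ⟨hue, huS | huL⟩ := Finset.mem_inter.1 hu |>.imp_right Finset.mem_union.1
  · obtain ⟨x, hx, hex⟩ := hScov u huS e (mem_incident.2 ⟨he, hue⟩)
    exact hfree x hx hex
  · obtain ⟨-, -, x, hx, hsub⟩ := Finset.mem_filter.1 huL
    exact hfree x hx (hsub (mem_incident.2 ⟨he, hue⟩))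

lemma biUnion_filter_owners_eq_empty {S : Finset α}
    (hScov : ∀ v ∈ S, ∀ e ∈ H.incident v, ∃ x ∈ G.verts, e ∈ μ x) {t : Finset α}
    (hown : G.owners μ t = ∅) :
    (H.edges.filter fun s => G.owners μ s = G.owners μ t).biUnion
      (· ∩ (S ∪ H.linkVerts G μ)) = ∅ := by
  refine Finset.eq_empty_of_forall_notMem fun u hu => ?_
  obtain ⟨s, hs, hus⟩ := Finset.mem_biUnion.1 hu
  obtain ⟨hs, hst⟩ := Finset.mem_filter.1 hs
  rw [inter_eq_empty_of_owners_eq_empty hScov hs (hst.trans hown)] at hus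
  exact Finset.notMem_empty u hus

lemma IsMinorMap.biUnion_filter_owners_sdiff_linkVerts (hG : G.IsGraph)
    (hμ : IsMinorMap G H.dual μ) {S : Finset α} (hS : Set.BijOn (G.touched μ) S G.edges)
    {x : γ} (hx : x ∈ G.verts) {t : Finset α} (ht : t ∈ μ x) :
    (H.edges.filter fun s => G.owners μ s = G.owners μ t).biUnion
      (· ∩ (S ∪ H.linkVerts G μ)) \ H.linkVerts G μ = G.connectorsAt μ S x := by
  rw [hμ.filter_owners_eq hx ht]
  ext u
  simp only [connectorsAt, touched, Finset.mem_sdiff, Finset.mem_biUnion, Finset.mem_inter,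
    Finset.mem_union, Finset.mem_filter]
  constructor
  · rintro ⟨⟨e, he, hue, huS | huL⟩, hnL⟩
    exacts [⟨huS, hx, e, he, hue⟩, absurd huL hnL]
  · rintro ⟨huS, -, e, he, hue⟩
    exact ⟨⟨e, he, hue, .inl huS⟩, hμ.notMem_linkVerts hG hS huS⟩

lemma IsMinorMap.reflTransGen_linked (hH : H.degree ≤ 2) (hμ : IsMinorMap G H.dual μ)
    {S : Finset α} (hScov : ∀ v ∈ S, ∀ e ∈ H.incident v, ∃ x ∈ G.verts, e ∈ μ x)
    {s t : Finset α} (hs : s ∈ H.edges) (ht : t ∈ H.edges) (hst : G.owners μ s = G.owners μ t) :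
    ReflTransGen (Linked H.edges (· ∩ (S ∪ H.linkVerts G μ)) (H.linkVerts G μ)) s t := by
  obtain ⟨x, hx⟩ | hown := (G.owners μ s).eq_empty_or_nonempty.symm
  · obtain ⟨hxG, hsx⟩ := Finset.mem_filter.1 hx
    have htx : t ∈ μ x := (Finset.mem_filter.1 (hst ▸ hx : x ∈ G.owners μ t)).2
    refine ReflTransGen.mono (fun a b ⟨ha, hb, hab⟩ => ?_) _ _ ((hμ.1 x hxG).2.2 s hsx t htx)
    obtain ⟨v, hv, hI⟩ := exists_incident_eq_pair_of_dual_adj hH hab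
    have hva : a ∈ H.incident v := hI ▸ Finset.mem_insert_self a {b}
    have hvb : b ∈ H.incident v := hI ▸ Finset.mem_insert_of_mem (Finset.mem_singleton_self b)
    have hvL : v ∈ H.linkVerts G μ := Finset.mem_filter.2 ⟨hv, ⟨a, hva⟩, x, hxG,
      hI ▸ Finset.insert_subset_iff.2 ⟨ha, Finset.singleton_subset_iff.2 hb⟩⟩
    exact ⟨(mem_incident.1 hva).1, (mem_incident.1 hvb).1, .inr ⟨v, hvL,
      Finset.mem_inter.2 ⟨(mem_incident.1 hva).2, Finset.mem_union_right _ hvL⟩,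
      Finset.mem_inter.2 ⟨(mem_incident.1 hvb).2, Finset.mem_union_right _ hvL⟩⟩⟩
  · exact .single ⟨hs, ht, .inl ((inter_eq_empty_of_owners_eq_empty hScov hs hown).trans
      (inter_eq_empty_of_owners_eq_empty hScov ht (hst ▸ hown)).symm)⟩

theorem IsMinorMap.exists_reflTransGen_contract (hG : G.IsGraph) (hH : H.degree ≤ 2)
    (hμ : IsMinorMap G H.dual μ) {S : Finset α} (hSH : S ⊆ H.verts)
    (hScov : ∀ v ∈ S, ∀ e ∈ H.incident v, ∃ x ∈ G.verts, e ∈ μ x)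
    (hS : Set.BijOn (G.touched μ) S G.edges) :
    ∃ K, ReflTransGen Step H K ∧ K.verts = S ∧
      G.verts.image (G.connectorsAt μ S) ⊆ K.edges ∧
      K.edges ⊆ insert ∅ (G.verts.image (G.connectorsAt μ S)) := by
  set L := H.linkVerts G μ
  obtain ⟨K₀, hK₀, hK₀v, hK₀e⟩ := H.exists_reflTransGen_restrict (S ∪ L)
  obtain ⟨K, hK, hKv, hKe⟩ := K₀.exists_reflTransGen_mergeVertices H.edges (· ∩ (S ∪ L))
    (G.owners μ) L hK₀e
    (fun w hw => hK₀v ▸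
      Finset.mem_inter.2 ⟨(Finset.mem_filter.1 hw).1, Finset.mem_union_right _ hw⟩)
    (fun w hw => by
      obtain ⟨-, ⟨e, he⟩, -⟩ := Finset.mem_filter.1 hw
      exact ⟨e, (mem_incident.1 he).1,
        Finset.mem_inter.2 ⟨(mem_incident.1 he).2, Finset.mem_union_right _ hw⟩⟩)
    (fun w hw s hs t ht hws hwt => hμ.owners_eq_of_mem_linkVerts hw hs ht
      (Finset.mem_inter.1 hws).1 (Finset.mem_inter.1 hwt).1)
    (fun s hs t ht => hμ.reflTransGen_linked hH hScov hs ht)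
  refine ⟨K, hK₀.trans hK, ?_, fun e he => ?_, ?_⟩
  · rw [hKv, hK₀v]
    ext u
    simp only [Finset.mem_sdiff, Finset.mem_inter, Finset.mem_union]
    exact ⟨fun ⟨⟨_, h⟩, hL⟩ => h.resolve_right hL,
      fun hu => ⟨⟨hSH hu, .inl hu⟩, hμ.notMem_linkVerts hG hS hu⟩⟩
  · obtain ⟨x, hx, rfl⟩ := Finset.mem_image.1 he
    obtain ⟨t, ht⟩ := (hμ.1 x hx).1
    rw [hKe, ← hμ.biUnion_filter_owners_sdiff_linkVerts hG hS hx ht]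
    exact Finset.mem_image_of_mem _ (hμ.subset_edges hx ht)
  · rw [hKe, Finset.image_subset_iff]
    intro t _
    obtain ⟨x, hx⟩ | hown := (G.owners μ t).eq_empty_or_nonempty.symm
    · obtain ⟨hxG, htx⟩ := Finset.mem_filter.1 hx
      rw [hμ.biUnion_filter_owners_sdiff_linkVerts hG hS hxG htx]
      exact Finset.mem_insert_of_mem (Finset.mem_image_of_mem _ hxG)
    · rw [biUnion_filter_owners_eq_empty hScov hown, Finset.empty_sdiff]
      exact Finset.mem_insert_self _ _

end BranchSets

/-- If a connected graph `G` is a minor of the dual of a degree-2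
hypergraph `H`, then `G^d` is a hypergraph dilution of `H`. -/
theorem dilutesTo_dual_of_minor_dual (G : Hypergraph γ) (H : Hypergraph α)
    (hG : G.IsGraph) (hGc : G.Connected) (hH : H.degree ≤ 2)
    (hm : IsMinor G H.dual) : H.DilutesTo G.dual := by
  obtain ⟨μ, hμ⟩ := hm
  obtain ⟨S, hSH, hScov, hS⟩ := hμ.exists_connectors hG hH
  obtain ⟨K, hHK, hKv, hKe, hKe'⟩ := hμ.exists_reflTransGen_contract hG hH hSH hScov hS
  obtain ⟨K', hKK', hK'v, hK'e⟩ :=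
    K.exists_reflTransGen_edges_eq_of_subset_insert_empty hKe hKe' (hGc.1.image _)
  refine ⟨K', hHK.trans hKK', isomorphic_of_bijOn (φ := G.touched μ) (by rwa [hK'v, hKv]) ?_⟩
  rw [hK'e, Finset.image_image]
  exact Finset.image_congr fun x _ => image_connectorsAt hS x

end Hypergraph

end DilutionPaper
end

section
/- For all integers n ≥ 1 and m ≥ 2, the n×m jigsaw dilutes to the n×(m−1) jigsaw, i.e., the n×(m−1) jigsaw is a hypergraph dilution of the n×m jigsaw. -/
namespace DilutionPaper

universe u v w

variable {α : Type u} {β : Type v} {γ : Type w}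
variable [DecidableEq α] [DecidableEq β] [DecidableEq γ]

namespace Hypergraph

/-!
Read through the duality `jigsaw n m = (gridGraph n m).dual`, deleting a vertex of the jigsaw
deletes an edge of the grid, and merging on a vertex `{p, q}` of the jigsaw whose endpoint `q`
is a leaf of the grid deletes `q` together with its edge. So delete the vertical edges of the
last column, which turns every vertex of that column into a leaf, and then remove these leaves
one at a time: what remains is the `n × (m - 1)` grid, whose dual is the smaller jigsaw.
-/

@[ext]
theorem ext {H G : Hypergraph α} (hv : H.verts = G.verts) (he : H.edges = G.edges) : H = G := by
  cases H; cases G; simp_all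

theorem mem_incident_s10 {H : Hypergraph α} {v : α} {f : Finset α} :
    f ∈ H.incident v ↔ f ∈ H.edges ∧ v ∈ f :=
  Finset.mem_filter

theorem Isomorphic.refl (H : Hypergraph α) : H.Isomorphic H :=
  ⟨id, Set.bijOn_id _, by simp only [Finset.image_id]; exact Set.bijOn_id _⟩

theorem dilutesTo_of_reflTransGen {H K : Hypergraph α} (h : Relation.ReflTransGen Step H K) :
    H.DilutesTo K :=
  ⟨K, h, Isomorphic.refl K⟩

def deleteEdges (H : Hypergraph α) (F : Finset (Finset α)) : Hypergraph α where
  verts := H.verts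
  edges := H.edges \ F
  valid := fun e he => H.valid e (Finset.mem_sdiff.mp he).1

def induce (H : Hypergraph α) (S : Finset α) : Hypergraph α where
  verts := S
  edges := H.edges.filter (· ⊆ S)
  valid := fun _ he => (Finset.mem_filter.mp he).2

theorem induce_incident (H : Hypergraph α) (S : Finset α) (v : α) :
    (H.induce S).incident v = (H.incident v).filter (· ⊆ S) := by
  ext f
  simp only [incident, induce, Finset.mem_filter]
  tauto

theorem induce_verts_self (H : Hypergraph α) : H.induce H.verts = H :=
  ext rfl (Finset.filter_true_of_mem H.valid)

theorem induce_induce (H : Hypergraph α) {S T : Finset α} (hTS : T ⊆ S) :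
    (H.induce S).induce T = H.induce T := by
  ext f
  · rfl
  · simp only [induce, Finset.mem_filter]
    exact ⟨fun h => ⟨h.1.1, h.2⟩, fun h => ⟨⟨h.1, h.2.trans hTS⟩, h.2⟩⟩

theorem induce_deleteEdges (H : Hypergraph α) {F : Finset (Finset α)} {S : Finset α}
    (hF : ∀ f ∈ F, ¬f ⊆ S) : (H.deleteEdges F).induce S = H.induce S := by
  refine ext rfl ?_
  ext f
  change f ∈ (H.edges \ F).filter (· ⊆ S) ↔ f ∈ H.edges.filter (· ⊆ S)
  simp only [Finset.mem_filter, Finset.mem_sdiff]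
  exact ⟨fun h => ⟨h.1.1, h.2⟩, fun h => ⟨⟨h.1, fun hf => hF f hf h.2⟩, h.2⟩⟩

theorem dual_deleteVertex (H : Hypergraph α) (e : Finset α) :
    H.dual.deleteVertex e = (H.deleteEdge e).dual := by
  ext f
  · rfl
  · simp only [dual, deleteVertex, deleteEdge, Finset.image_image]
    congr! 2 with v
    ext g
    simp only [Function.comp_apply, incident, Finset.mem_erase, Finset.mem_filter]
    tauto

theorem reflTransGen_dual_deleteEdges (H : Hypergraph α) {F : Finset (Finset α)}
    (hF : F ⊆ H.edges) : Relation.ReflTransGen Step H.dual (H.deleteEdges F).dual := by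
  induction F using Finset.induction_on with
  | empty => simpa [deleteEdges] using Relation.ReflTransGen.refl
  | insert e F he ih =>
    have hdel : H.deleteEdges (insert e F) = (H.deleteEdges F).deleteEdge e :=
      ext rfl (Finset.sdiff_insert _ _ _)
    have hmem : e ∈ (H.deleteEdges F).dual.verts :=
      Finset.mem_sdiff.mpr ⟨hF (Finset.mem_insert_self e F), he⟩
    rw [hdel, ← dual_deleteVertex]
    exact (ih ((Finset.subset_insert e F).trans hF)).tail (Step.deleteVertex _ e hmem)

theorem dual_merge_of_incident_eq_singleton (H : Hypergraph α) {p q : α} (hpq : p ≠ q)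
    (hq : H.incident q = {{p, q}}) :
    H.dual.merge {p, q} = (H.induce (H.verts.erase q)).dual := by
  have he : {p, q} ∈ H.edges := (mem_incident_s10.mp (hq ▸ Finset.mem_singleton_self _)).1
  have hp : p ∈ H.verts := H.valid _ he (Finset.mem_insert_self p {q})
  have mem_incident_iff (v : α) : {p, q} ∈ H.incident v ↔ v = p ∨ v = q := by
    simp [mem_incident_s10, he, eq_comm]
  have mem_iff_eq {f : Finset α} (hf : f ∈ H.edges) : q ∈ f ↔ f = {p, q} := by
    rw [← Finset.mem_singleton, ← hq, mem_incident_s10, and_iff_right hf]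
  have hedges : (H.induce (H.verts.erase q)).edges = H.edges.erase {p, q} := by
    ext f
    change f ∈ H.edges.filter (· ⊆ H.verts.erase q) ↔ _
    rw [Finset.mem_erase, Finset.mem_filter, and_comm (a := f ≠ _), and_congr_right_iff]
    intro hf
    rw [Finset.subset_erase, and_iff_right (H.valid f hf), mem_iff_eq hf]
  have hinduce (v : α) :
      (H.induce (H.verts.erase q)).incident v = (H.incident v).erase {p, q} := by
    rw [incident, hedges, Finset.filter_erase]
    rfl
  have hmerged : H.dual.mergedEdge {p, q} = (H.incident p).erase {p, q} := by
    ext g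
    simp only [mergedEdge, Finset.mem_erase, Finset.mem_biUnion, id, and_congr_right_iff]
    intro hg
    constructor
    · rintro ⟨_, hx, hgx⟩
      obtain ⟨hx, hex⟩ := mem_incident_s10.mp hx
      obtain ⟨v, -, rfl⟩ := Finset.mem_image.mp hx
      obtain rfl | rfl := (mem_incident_iff v).mp hex
      · exact hgx
      · exact absurd (Finset.mem_singleton.mp (hq ▸ hgx)) hg
    · exact fun hgp => ⟨H.incident p, mem_incident_s10.mpr
        ⟨Finset.mem_image_of_mem _ hp, (mem_incident_iff p).mpr (Or.inl rfl)⟩, hgp⟩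
  refine ext hedges.symm ?_
  change H.dual.edges \ H.dual.incident {p, q} ∪ {H.dual.mergedEdge {p, q}} = _
  rw [hmerged]
  ext x
  rw [Finset.mem_union, Finset.mem_sdiff, Finset.mem_singleton, mem_incident_s10]
  simp only [dual, hinduce, Finset.mem_image]
  constructor
  · rintro (⟨⟨v, hv, rfl⟩, hev⟩ | rfl)
    · have hv' : {p, q} ∉ H.incident v := fun h => hev ⟨⟨v, hv, rfl⟩, h⟩
      have hvq : v ≠ q := fun h => hv' ((mem_incident_iff v).mpr (Or.inr h))
      exact ⟨v, Finset.mem_erase.mpr ⟨hvq, hv⟩, Finset.erase_eq_of_notMem hv'⟩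
    · exact ⟨p, Finset.mem_erase.mpr ⟨hpq, hp⟩, rfl⟩
  · rintro ⟨v, hv, rfl⟩
    obtain ⟨hvq, hv⟩ := Finset.mem_erase.mp hv
    by_cases hvp : v = p
    · exact Or.inr (hvp ▸ rfl)
    · have hv' : {p, q} ∉ H.incident v := fun h => (mem_incident_iff v).mp h |>.elim hvp hvq
      rw [Finset.erase_eq_of_notMem hv']
      exact Or.inl ⟨⟨v, hv, rfl⟩, fun h => hv' h.2⟩

theorem reflTransGen_dual_induce_sdiff (H : Hypergraph α) {Q : Finset α}
    (hQ : ∀ q ∈ Q, ∃ p ∉ Q, H.incident q = {{p, q}}) :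
    Relation.ReflTransGen Step H.dual (H.induce (H.verts \ Q)).dual := by
  induction Q using Finset.induction_on generalizing H with
  | empty => rw [Finset.sdiff_empty, induce_verts_self]
  | insert q Q hqQ ih =>
    obtain ⟨p, hpQ, hq⟩ := hQ q (Finset.mem_insert_self q Q)
    have hpq : p ≠ q := fun h => hpQ (h ▸ Finset.mem_insert_self q Q)
    have hqe : {p, q} ∈ H.incident q := hq ▸ Finset.mem_singleton_self _
    obtain ⟨he, hqpq⟩ := mem_incident_s10.mp hqe
    have hmerge : Step H.dual (H.induce (H.verts.erase q)).dual := by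
      rw [← dual_merge_of_incident_eq_singleton H hpq hq]
      refine Step.merge _ _ he ⟨H.incident q, mem_incident_s10.mpr ⟨?_, hqe⟩⟩
      exact Finset.mem_image_of_mem _ (H.valid _ he hqpq)
    have hQ' :
        ∀ q' ∈ Q, ∃ p' ∉ Q, (H.induce (H.verts.erase q)).incident q' = {{p', q'}} := by
      intro q' hq'Q
      obtain ⟨p', hp'Q, hq'⟩ := hQ q' (Finset.mem_insert_of_mem hq'Q)
      have hq'e : {p', q'} ∈ H.incident q' := hq' ▸ Finset.mem_singleton_self _
      refine ⟨p', fun h => hp'Q (Finset.mem_insert_of_mem h), ?_⟩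
      rw [induce_incident, hq', Finset.filter_singleton, if_pos]
      refine Finset.subset_erase.mpr ⟨H.valid _ (mem_incident_s10.mp hq'e).1, ?_⟩
      rw [Finset.mem_insert, Finset.mem_singleton]
      rintro (rfl | rfl)
      exacts [hp'Q (Finset.mem_insert_self _ Q), hqQ hq'Q]
    have hinduce : (H.induce (H.verts.erase q)).induce ((H.verts.erase q) \ Q) =
        H.induce (H.verts \ insert q Q) := by
      rw [induce_induce _ Finset.sdiff_subset, Finset.sdiff_insert, Finset.erase_sdiff_comm]
    exact Relation.ReflTransGen.head hmerge (hinduce ▸ ih _ hQ')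

theorem mem_gridGraph_verts {n m : ℕ} {a : ℕ × ℕ} :
    a ∈ (gridGraph n m).verts ↔ a.1 < n ∧ a.2 < m := by
  simp [gridGraph]

theorem mem_gridGraph_edges {n m : ℕ} {e : Finset (ℕ × ℕ)} :
    e ∈ (gridGraph n m).edges ↔
      ∃ a ∈ (gridGraph n m).verts, ∃ b ∈ (gridGraph n m).verts,
        Nat.dist a.1 b.1 + Nat.dist a.2 b.2 = 1 ∧ {a, b} = e := by
  simp [gridGraph, and_assoc]

theorem gridGraph_verts_mono (n : ℕ) {m m' : ℕ} (h : m' ≤ m) :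
    (gridGraph n m').verts ⊆ (gridGraph n m).verts :=
  Finset.product_subset_product_right (Finset.range_subset_range.mpr h)

theorem gridGraph_induce (n : ℕ) {m m' : ℕ} (h : m' ≤ m) :
    (gridGraph n m).induce (gridGraph n m').verts = gridGraph n m' := by
  refine ext rfl ?_
  ext e
  change e ∈ (gridGraph n m).edges.filter _ ↔ _
  rw [Finset.mem_filter, mem_gridGraph_edges, mem_gridGraph_edges]
  constructor
  · rintro ⟨⟨a, -, b, -, hab, rfl⟩, hsub⟩
    rw [Finset.insert_subset_iff, Finset.singleton_subset_iff] at hsub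
    exact ⟨a, hsub.1, b, hsub.2, hab, rfl⟩
  · rintro ⟨a, ha, b, hb, hab, rfl⟩
    exact ⟨⟨a, gridGraph_verts_mono n h ha, b, gridGraph_verts_mono n h hb, hab, rfl⟩,
      Finset.insert_subset ha (Finset.singleton_subset_iff.mpr hb)⟩

def gridComb (n k : ℕ) : Hypergraph (ℕ × ℕ) :=
  (gridGraph n (k + 2)).deleteEdges
    ((gridGraph n (k + 2)).induce (Finset.range n ×ˢ {k + 1})).edges

theorem gridComb_incident_last {n k i : ℕ} (hi : i < n) :
    (gridComb n k).incident (i, k + 1) = {{(i, k), (i, k + 1)}} := by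
  refine Finset.eq_singleton_iff_unique_mem.mpr ⟨?_, fun f hf => ?_⟩
  · refine mem_incident_s10.mpr ⟨Finset.mem_sdiff.mpr ⟨?_, ?_⟩, by simp⟩
    · exact mem_gridGraph_edges.mpr
        ⟨(i, k), mem_gridGraph_verts.mpr ⟨hi, by omega⟩, (i, k + 1),
          mem_gridGraph_verts.mpr ⟨hi, by omega⟩, by simp [Nat.dist], rfl⟩
    · intro h
      have := (Finset.mem_filter.mp h).2 (Finset.mem_insert_self _ _)
      simp at this
  · obtain ⟨hf, hmem⟩ := mem_incident_s10.mp hf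
    obtain ⟨hfG, hfC⟩ := Finset.mem_sdiff.mp hf
    obtain ⟨⟨a₁, a₂⟩, ha, ⟨b₁, b₂⟩, hb, hab, rfl⟩ := mem_gridGraph_edges.mp hfG
    have hC : ¬((a₁ < n ∧ a₂ = k + 1) ∧ (b₁ < n ∧ b₂ = k + 1)) := fun h =>
      hfC (Finset.mem_filter.mpr ⟨hfG, by simp [Finset.insert_subset_iff, h]⟩)
    rw [mem_gridGraph_verts] at ha hb
    simp only [Finset.mem_insert, Finset.mem_singleton, Prod.mk.injEq] at hmem
    simp only [Nat.dist] at hab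
    rcases hmem with ⟨rfl, rfl⟩ | ⟨rfl, rfl⟩
    · obtain ⟨rfl, rfl⟩ : b₁ = i ∧ b₂ = k := by omega
      exact Finset.pair_comm _ _
    · obtain ⟨rfl, rfl⟩ : a₁ = i ∧ a₂ = k := by omega
      rfl

theorem gridComb_induce (n k : ℕ) :
    (gridComb n k).induce ((gridComb n k).verts \ Finset.range n ×ˢ {k + 1}) =
      gridGraph n (k + 1) := by
  have hverts :
      (gridComb n k).verts \ Finset.range n ×ˢ {k + 1} = (gridGraph n (k + 1)).verts := by
    ext ⟨a, b⟩
    change _ ∈ (gridGraph n (k + 2)).verts \ _ ↔ _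
    simp only [Finset.mem_sdiff, mem_gridGraph_verts, Finset.mem_product, Finset.mem_range,
      Finset.mem_singleton]
    omega
  rw [hverts, gridComb, induce_deleteEdges, gridGraph_induce n (by omega)]
  intro f hf hsub
  obtain ⟨hfG, hfC⟩ := Finset.mem_filter.mp hf
  obtain ⟨a, -, b, -, -, rfl⟩ := mem_gridGraph_edges.mp hfG
  have haC := hfC (Finset.mem_insert_self a {b})
  have ha := mem_gridGraph_verts.mp (hsub (Finset.mem_insert_self a {b}))
  rw [Finset.mem_product, Finset.mem_singleton] at haC
  omega

theorem jigsaw_dilutesTo_jigsaw_succ (n k : ℕ) :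
    (jigsaw n (k + 2)).DilutesTo (jigsaw n (k + 1)) := by
  have hcut : Relation.ReflTransGen Step (jigsaw n (k + 2)) (gridComb n k).dual :=
    reflTransGen_dual_deleteEdges _ (Finset.filter_subset _ _)
  have hleaves : Relation.ReflTransGen Step (gridComb n k).dual (jigsaw n (k + 1)) := by
    rw [jigsaw, ← gridComb_induce]
    refine reflTransGen_dual_induce_sdiff _ fun ⟨i, j⟩ hq => ?_
    obtain ⟨hi, rfl⟩ : i < n ∧ k + 1 = j := by simpa using hq
    exact ⟨(i, k), by simp, gridComb_incident_last hi⟩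
  exact dilutesTo_of_reflTransGen (hcut.trans hleaves)

theorem jigsaw_dilutesTo_jigsaw_general (n m : ℕ) (hm : 2 ≤ m) :
    (jigsaw n m).DilutesTo (jigsaw n (m - 1)) := by
  obtain ⟨k, rfl⟩ := Nat.exists_eq_add_of_le' hm
  exact jigsaw_dilutesTo_jigsaw_succ n k

/-- The `n×m` jigsaw dilutes to the `n×(m−1)` jigsaw. -/
theorem jigsaw_dilutesTo_jigsaw (n m : ℕ) (hn : 1 ≤ n) (hm : 2 ≤ m) :
    (jigsaw n m).DilutesTo (jigsaw n (m - 1)) :=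
  jigsaw_dilutesTo_jigsaw_general n m hm

end Hypergraph

end DilutionPaper
end
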